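/- Let λ_1 < λ_2 < ... < λ_{k+1} ≤ ... ≤ λ_n and consider, over positive increasing weights 0 < α_1 < ... < α_k, the quantity κ(α) = α_k(λ_n − λ_1) / min{ α_1(λ_{k+1} − λ_k), min_{1≤i<k} (λ_{k-i+1} − λ_{k-i})(α_{i+1} − α_i) }. Then the minimum over all such α of κ(α) equals (λ_n − λ_1) Σ_{i=1}^k 1/(λ_{i+1} − λ_i), and it is achieved by α_i = Σ_{j=0}^{i-1} 1/(λ_{k-j+1} − λ_{k-j}) (or any positive multiple thereof). -/
import Mathlib


/-- The denominator appearing in the condition number of the Brockett cost: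
`min{ α₁(λ_{k+1} − λ_k), min_{1 ≤ i < k} (λ_{k−i+1} − λ_{k−i})(α_{i+1} − α_i) }`. -/
noncomputable def brockettDenom (k : ℕ) (lam α : ℕ → ℝ) : ℝ :=
  sInf ({α 1 * (lam (k + 1) - lam k)} ∪
    {r : ℝ | ∃ i, 1 ≤ i ∧ i < k ∧ r = (lam (k - i + 1) - lam (k - i)) * (α (i + 1) - α i)})

/-- The condition number `κ(α)` of the Brockett cost with weights `α`. -/
noncomputable def brockettKappa (k n : ℕ) (lam α : ℕ → ℝ) : ℝ :=
  α k * (lam n - lam 1) / brockettDenom k lam α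

/-- Admissibility of the weights: `0 < α₁ < α₂ < ... < α_k`. -/
def brockettAdm (k : ℕ) (α : ℕ → ℝ) : Prop :=
  0 < α 1 ∧ ∀ i, 1 ≤ i → i < k → α i < α (i + 1)

private lemma reindex_sum (k : ℕ) (f : ℕ → ℝ) :
    ∑ j ∈ Finset.range k, f (k - j) = ∑ i ∈ Finset.Icc 1 k, f i := by
  refine Finset.sum_nbij' (fun j => k - j) (fun i => k - i) ?_ ?_ ?_ ?_ ?_
  · intro j hj; simp at hj ⊢; omega
  · intro i hi; simp at hi ⊢; omega
  · intro j hj; simp at hj ⊢; omega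
  · intro i hi; simp at hi ⊢; omega
  · intro j hj; rfl

private lemma lam_chain (n : ℕ) (lam : ℕ → ℝ)
    (h1 : ∀ i, 1 ≤ i → i < n → lam i ≤ lam (i+1)) :
    ∀ a b, 1 ≤ a → a ≤ b → b ≤ n → lam a ≤ lam b := by
  intro a b ha hab hbn
  induction b with
  | zero => omega
  | succ m ih =>
    rcases Nat.lt_or_ge a (m+1) with h | h
    · exact le_trans (ih (by omega) (by omega)) (h1 m (by omega) (by omega))
    · have : a = m + 1 := by omega
      subst this; rfl

theorem stmt18 (k n : ℕ) (hk : 1 ≤ k) (hkn : k + 1 ≤ n)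
    (lam : ℕ → ℝ)
    (hstrict : ∀ i, 1 ≤ i → i ≤ k → lam i < lam (i + 1))
    (hmono : ∀ i, k + 1 ≤ i → i < n → lam i ≤ lam (i + 1)) :
    IsLeast {r : ℝ | ∃ α : ℕ → ℝ, brockettAdm k α ∧ r = brockettKappa k n lam α}
        ((lam n - lam 1) * ∑ i ∈ Finset.Icc 1 k, 1 / (lam (i + 1) - lam i)) ∧
      brockettKappa k n lam
          (fun i => ∑ j ∈ Finset.range i, 1 / (lam (k - j + 1) - lam (k - j)))
        = (lam n - lam 1) * ∑ i ∈ Finset.Icc 1 k, 1 / (lam (i + 1) - lam i) := by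
  have hDelta : ∀ i, 1 ≤ i → i ≤ k → 0 < lam (i + 1) - lam i :=
    fun i h1 h2 => sub_pos.2 (hstrict i h1 h2)
  have hDeltaki : ∀ i, 1 ≤ i → i < k → 0 < lam (k - i + 1) - lam (k - i) := by
    intro i h1 h2; exact hDelta (k - i) (by omega) (by omega)
  have hstep : ∀ i, 1 ≤ i → i < n → lam i ≤ lam (i + 1) := by
    intro i h1 h2
    rcases Nat.lt_or_ge i (k + 1) with h | h
    · exact (hstrict i h1 (by omega)).le
    · exact hmono i h (by omega)
  have hlamn : 0 < lam n - lam 1 := by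
    have h2n : lam 2 ≤ lam n := lam_chain n lam hstep 2 n (by omega) (by omega) le_rfl
    have := hstrict 1 le_rfl hk
    simpa using by linarith
  -- the reindexed sum
  have hre : ∀ α : ℕ → ℝ, True := fun _ => trivial
  have reidx : ∑ j ∈ Finset.range k, 1 / (lam (k - j + 1) - lam (k - j))
      = ∑ i ∈ Finset.Icc 1 k, 1 / (lam (i + 1) - lam i) :=
    reindex_sum k (fun i => 1 / (lam (i + 1) - lam i))
  set Sig := ∑ i ∈ Finset.Icc 1 k, 1 / (lam (i + 1) - lam i) with hSig
  -- the optimal α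
  set as : ℕ → ℝ := fun i => ∑ j ∈ Finset.range i, 1 / (lam (k - j + 1) - lam (k - j))
    with halphas
  have halphas1 : as 1 = 1 / (lam (k + 1) - lam k) := by
    simp [halphas, Finset.sum_range_one]
  have halphasd : ∀ i, as (i + 1) - as i = 1 / (lam (k - i + 1) - lam (k - i)) := by
    intro i
    simp [halphas, Finset.sum_range_succ]
  -- part 2: denominator of as is 1
  have hden : brockettDenom k lam as = 1 := by
    have hset : ({as 1 * (lam (k + 1) - lam k)} ∪
        {r : ℝ | ∃ i, 1 ≤ i ∧ i < k ∧
          r = (lam (k - i + 1) - lam (k - i)) * (as (i + 1) - as i)}) = {(1:ℝ)} := by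
      ext r
      constructor
      · rintro (h | ⟨i, h1, h2, rfl⟩)
        · simp only [Set.mem_singleton_iff] at h ⊢
          rw [h, halphas1, one_div, inv_mul_cancel₀ (hDelta k hk le_rfl).ne']
        · simp only [Set.mem_singleton_iff]
          rw [halphasd i, one_div, mul_inv_cancel₀ (hDeltaki i h1 h2).ne']
      · rintro rfl
        left
        simp only [Set.mem_singleton_iff]
        rw [halphas1, one_div, inv_mul_cancel₀ (hDelta k hk le_rfl).ne']
    rw [brockettDenom, hset, csInf_singleton]
  have hach : brockettKappa k n lam as = (lam n - lam 1) * Sig := by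
    rw [brockettKappa, hden, div_one]
    have : as k = Sig := by rw [halphas]; exact reidx
    rw [this]; ring
  -- admissibility of as
  have hadm : brockettAdm k as := by
    constructor
    · rw [halphas1]; exact one_div_pos.2 (hDelta k hk le_rfl)
    · intro i h1 h2
      have := halphasd i
      have hp := one_div_pos.2 (hDeltaki i h1 h2)
      linarith
  refine ⟨⟨⟨as, hadm, hach.symm⟩, ?_⟩, hach⟩
  -- lower bound
  rintro r ⟨α, ⟨halpha1, halphastep⟩, rfl⟩
  set S : Set ℝ := {α 1 * (lam (k + 1) - lam k)} ∪
      {r : ℝ | ∃ i, 1 ≤ i ∧ i < k ∧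
        r = (lam (k - i + 1) - lam (k - i)) * (α (i + 1) - α i)} with hS
  have hsetS : {r : ℝ | ∃ i, 1 ≤ i ∧ i < k ∧
      r = (lam (k - i + 1) - lam (k - i)) * (α (i + 1) - α i)}
      = (fun i => (lam (k - i + 1) - lam (k - i)) * (α (i + 1) - α i)) '' (Set.Ico 1 k) := by
    ext r
    exact ⟨fun ⟨i, h1, h2, h3⟩ => ⟨i, ⟨h1, h2⟩, h3.symm⟩,
      fun ⟨i, ⟨h1, h2⟩, h3⟩ => ⟨i, h1, h2, h3.symm⟩⟩
  have hfin : S.Finite := by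
    rw [hS, hsetS]
    exact (Set.finite_singleton _).union ((Set.finite_Ico 1 k).image _)
  have hne : S.Nonempty := ⟨_, Or.inl rfl⟩
  have hbdd := hfin.bddBelow
  have hDdef : brockettDenom k lam α = sInf S := rfl
  have hpos_all : ∀ x ∈ S, 0 < x := by
    rintro x (h | ⟨i, h1, h2, rfl⟩)
    · simp only [Set.mem_singleton_iff] at h
      rw [h]; exact mul_pos halpha1 (hDelta k hk le_rfl)
    · exact mul_pos (hDeltaki i h1 h2) (sub_pos.2 (halphastep i h1 h2))
  have hDmem : sInf S ∈ S := hne.csInf_mem hfin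
  have hDpos : 0 < sInf S := hpos_all _ hDmem
  have hD0 : sInf S ≤ α 1 * (lam (k + 1) - lam k) := csInf_le hbdd (Or.inl rfl)
  have hDi : ∀ i, 1 ≤ i → i < k →
      sInf S ≤ (lam (k - i + 1) - lam (k - i)) * (α (i + 1) - α i) :=
    fun i h1 h2 => csInf_le hbdd (Or.inr ⟨i, h1, h2, rfl⟩)
  -- telescoping
  have key : ∀ m, 1 ≤ m → m ≤ k →
      sInf S * ∑ j ∈ Finset.range m, 1 / (lam (k - j + 1) - lam (k - j)) ≤ α m := by
    intro m
    induction m with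
    | zero => omega
    | succ m ih =>
      intro _ hmk
      rcases Nat.eq_zero_or_pos m with rfl | hm
      · rw [Nat.zero_add, Finset.sum_range_one, Nat.sub_zero, mul_one_div,
          div_le_iff₀ (hDelta k hk le_rfl)]
        linarith [hD0]
      · have hmlt : m < k := by omega
        have ihm := ih hm (by omega)
        have hD' := hDeltaki m hm hmlt
        have hstep' : sInf S * (1 / (lam (k - m + 1) - lam (k - m))) ≤ α (m + 1) - α m := by
          rw [mul_one_div, div_le_iff₀ hD']
          calc sInf S ≤ (lam (k - m + 1) - lam (k - m)) * (α (m + 1) - α m) :=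
                hDi m hm hmlt
            _ = (α (m + 1) - α m) * (lam (k - m + 1) - lam (k - m)) := by ring
        rw [Finset.sum_range_succ, mul_add]
        linarith
  have hkey : sInf S * Sig ≤ α k := by
    have := key k hk le_rfl
    rwa [reidx] at this
  show (lam n - lam 1) * Sig ≤ brockettKappa k n lam α
  rw [brockettKappa, hDdef, le_div_iff₀ hDpos]
  nlinarith [mul_le_mul_of_nonneg_left hkey hlamn.le]
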